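/- For every integer n ≥ 3, ∂_n(A_{0,1}) = z_{n-1}²; consequently (∂_{n-1} ∘ ∂_n)(A_{1,2}) = z_{n-1}² ≠ 1 = (∂_{n-1} ∘ d_1)(A_{1,2}), so ∂_{n-1} ∘ ∂_n ≠ ∂_{n-1} ∘ d_1 as maps P_n → P_{n-2} (disproving that the pure braid groups with these face maps form a Delta-group). -/

import Mathlib

namespace Braids

/-- The braid relations on the generators `σ_1, …, σ_{n-1}` (indexed by `Fin (n-1)`). -/
def braidRels (n : ℕ) : Set (FreeGroup (Fin (n - 1))) :=
  {r | (∃ i j : Fin (n - 1), (i : ℕ) + 1 = (j : ℕ) ∧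
          r = .of i * .of j * .of i * (.of j * .of i * .of j)⁻¹) ∨
       (∃ i j : Fin (n - 1), (i : ℕ) + 2 ≤ (j : ℕ) ∧
          r = .of i * .of j * (.of j * .of i)⁻¹)}

/-- The Artin braid group on `n` strands, presented by generators and the braid relations. -/
abbrev BraidGroup (n : ℕ) := PresentedGroup (braidRels n)

/-- The Artin generator `σ_{i+1}` (0-indexed). -/
def σ {n : ℕ} (i : Fin (n - 1)) : BraidGroup n := PresentedGroup.of i

/-- The transposition `(i, i+1)` associated to the generator `σ`. -/
def swapGen (n : ℕ) (i : Fin (n - 1)) : Equiv.Perm (Fin n) :=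
  Equiv.swap ⟨i.1, by have := i.2; omega⟩ ⟨i.1 + 1, by have := i.2; omega⟩

private lemma swap_braid {α : Type*} [DecidableEq α] {a b c : α}
    (hab : a ≠ b) (hac : a ≠ c) (hbc : b ≠ c) :
    Equiv.swap a b * Equiv.swap b c * Equiv.swap a b =
      Equiv.swap b c * Equiv.swap a b * Equiv.swap b c := by
  have h1 := Equiv.swap_apply_apply (Equiv.swap a b) b c
  rw [Equiv.swap_apply_right, Equiv.swap_apply_of_ne_of_ne hac.symm hbc.symm,
    Equiv.swap_inv] at h1
  have h2 := Equiv.swap_apply_apply (Equiv.swap b c) a b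
  rw [Equiv.swap_apply_of_ne_of_ne hab hac, Equiv.swap_apply_left, Equiv.swap_inv] at h2
  rw [← h1, ← h2]

private lemma swap_commute {α : Type*} [DecidableEq α] {a b c d : α}
    (hca : c ≠ a) (hcb : c ≠ b) (hda : d ≠ a) (hdb : d ≠ b) :
    Equiv.swap a b * Equiv.swap c d = Equiv.swap c d * Equiv.swap a b := by
  have h := Equiv.swap_apply_apply (Equiv.swap a b) c d
  rw [Equiv.swap_apply_of_ne_of_ne hca hcb, Equiv.swap_apply_of_ne_of_ne hda hdb,
    Equiv.swap_inv] at h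
  nth_rewrite 1 [h]
  rw [← mul_assoc, ← mul_assoc, Equiv.swap_mul_self, one_mul]

theorem braidRels_hold (n : ℕ) :
    ∀ r ∈ braidRels n, FreeGroup.lift (swapGen n) r = 1 := by
  rintro r (⟨i, j, hij, rfl⟩ | ⟨i, j, hij, rfl⟩) <;>
    simp only [map_mul, map_inv, FreeGroup.lift_apply_of, mul_inv_eq_one]
  · have hj : swapGen n j =
        Equiv.swap (⟨i.1 + 1, by have := i.2; have := j.2; omega⟩ : Fin n)
          ⟨i.1 + 2, by have := j.2; omega⟩ := by
      unfold swapGen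
      congr 1 <;> simp only [Fin.mk.injEq] <;> omega
    rw [hj]
    exact swap_braid (by simp only [ne_eq, Fin.mk.injEq]; omega)
      (by simp only [ne_eq, Fin.mk.injEq]; omega) (by simp only [ne_eq, Fin.mk.injEq]; omega)
  · exact swap_commute (by simp only [ne_eq, Fin.mk.injEq]; omega)
      (by simp only [ne_eq, Fin.mk.injEq]; omega) (by simp only [ne_eq, Fin.mk.injEq]; omega)
      (by simp only [ne_eq, Fin.mk.injEq]; omega)

/-- The canonical projection from the braid group to the symmetric group,
sending `σ_i` to the transposition `(i, i+1)`. -/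
def toPerm (n : ℕ) : BraidGroup n →* Equiv.Perm (Fin n) :=
  PresentedGroup.toGroup (braidRels_hold n)

/-- The pure braid group on `n` strands, as a subgroup of the braid group. -/
def PureBraid (n : ℕ) : Subgroup (BraidGroup n) := (toPerm n).ker

/-- The pure braid group `P n` as a group. -/
abbrev P (n : ℕ) := ↥(PureBraid n)

/-- The generator `σ_k` (1-indexed, junk value `1` for out-of-range `k`). -/
def sig (n k : ℕ) : BraidGroup n :=
  if h : 1 ≤ k ∧ k ≤ n - 1 then σ ⟨k - 1, by omega⟩ else 1

/-- The conjugating word `σ_{j-1} σ_{j-2} ⋯ σ_{i+1}`. -/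
def chain (n i j : ℕ) : BraidGroup n :=
  (((List.range (j - i - 1)).map (fun t => sig n (j - 1 - t))).prod)

/-- The pure braid generator `A_{i,j} = σ_{j-1} ⋯ σ_{i+1} σ_i² σ_{i+1}⁻¹ ⋯ σ_{j-1}⁻¹`
(for `1 ≤ i < j ≤ n`; junk values otherwise), as an element of the braid group. -/
def Agen (n i j : ℕ) : BraidGroup n := chain n i j * (sig n i) ^ 2 * (chain n i j)⁻¹

theorem toPerm_sig_sq (n k : ℕ) : (toPerm n (sig n k)) ^ 2 = 1 := by
  unfold sig
  split
  · show (toPerm n (PresentedGroup.of _)) ^ 2 = 1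
    rw [toPerm, PresentedGroup.toGroup.of]
    simp [swapGen, sq, Equiv.swap_mul_self]
  · simp

theorem Agen_mem (n i j : ℕ) : Agen n i j ∈ PureBraid n := by
  have : toPerm n (Agen n i j) = 1 := by
    unfold Agen
    rw [map_mul, map_mul, map_inv, map_pow, toPerm_sig_sq, mul_one, mul_inv_cancel]
  exact this

/-- `A_{i,j}` extended symmetrically: `A_{j,i} := A_{i,j}` and `A_{i,i} := 1`. -/
def ASym (n i j : ℕ) : BraidGroup n := if i = j then 1 else Agen n (min i j) (max i j)

theorem ASym_mem (n i j : ℕ) : ASym n i j ∈ PureBraid n := by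
  unfold ASym
  split
  · exact one_mem _
  · exact Agen_mem n _ _

/-- `A_{0,j} := (A_{1,j} A_{2,j} ⋯ A_{n,j})⁻¹`, as an element of the braid group. -/
def A0gen (n j : ℕ) : BraidGroup n :=
  (((List.range n).map (fun t => ASym n (t + 1) j)).prod)⁻¹

theorem A0gen_mem (n j : ℕ) : A0gen n j ∈ PureBraid n := by
  refine inv_mem (list_prod_mem ?_)
  intro x hx
  simp only [List.mem_map] at hx
  obtain ⟨t, -, rfl⟩ := hx
  exact ASym_mem n _ _

/-- The pure braid generator `A_{i,j}` (with the conventions `A_{j,i} = A_{i,j}`, `A_{i,i} = 1`),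
as an element of the pure braid group. -/
def A (n i j : ℕ) : P n := ⟨ASym n i j, ASym_mem n i j⟩

/-- The element `A_{0,j} = (A_{1,j} A_{2,j} ⋯ A_{n,j})⁻¹` of the pure braid group. -/
def A₀ (n j : ℕ) : P n := ⟨A0gen n j, A0gen_mem n j⟩

/-- The full twist `z_n = A_{1,2} (A_{1,3} A_{2,3}) ⋯ (A_{1,n} A_{2,n} ⋯ A_{n-1,n})`. -/
def fullTwist (n : ℕ) : P n :=
  (((List.range (n - 1)).map
    (fun jt => ((List.range (jt + 1)).map (fun it => A n (it + 1) (jt + 2))).prod)).prod)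

/-- The reindexing map associated with removing the `k`-th strand. -/
def phi (k m : ℕ) : ℕ := if m < k then m else m - 1

/-- `d` is the `k`-th strand-removal homomorphism `P n → P (n-1)`: it is determined by
`d (A_{i,j}) = 1` if `k ∈ {i, j}`, and `d (A_{i,j}) = A_{φ(i),φ(j)}` otherwise. -/
def IsStrandRemoval (n k : ℕ) (d : P n →* P (n - 1)) : Prop :=
  ∀ i j : ℕ, 1 ≤ i → i < j → j ≤ n →
    d (A n i j) = if k = i ∨ k = j then 1 else A (n - 1) (phi k i) (phi k j)

/-- The Brunnian subgroup `Brun_n = ∩_{k=1}^n Ker (d_k)`, for a family `d` of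
strand-removal homomorphisms. -/
def Brunnian (n : ℕ) (d : ℕ → (P n →* P (n - 1))) : Subgroup (P n) :=
  ⨅ k ∈ Finset.Icc 1 n, (d k).ker

/-- `θ` is the automorphism `θ_n` of `P n`: it fixes `A_{i,j}` for `2 ≤ i < j ≤ n` and sends
`A_{1,j}` to `A_{1,j}⁻¹ A_{0,j} A_{1,j}`. -/
def IsTheta (n : ℕ) (θ : MulAut (P n)) : Prop :=
  (∀ i j : ℕ, 2 ≤ i → i < j → j ≤ n → θ (A n i j) = A n i j) ∧
  (∀ j : ℕ, 1 < j → j ≤ n → θ (A n 1 j) = (A n 1 j)⁻¹ * A₀ n j * A n 1 j)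

/-- The homomorphism `∂_n := d_1 ∘ θ_n : P n → P (n-1)`. -/
def del (n : ℕ) (d : ℕ → (P n →* P (n - 1))) (θ : MulAut (P n)) : P n →* P (n - 1) :=
  (d 1).comp θ.toMonoidHom

/-- `Z_n := Brun_n ∩ Ker ∂_n`. -/
def Zgrp (n : ℕ) (d : ℕ → (P n →* P (n - 1))) (θ : MulAut (P n)) : Subgroup (P n) :=
  Brunnian n d ⊓ (del n d θ).ker

/-- `Bd_n := ∂_{n+1}(Brun_{n+1})`, built from strand-removal data on `n+1` strands. -/
def Bd (n : ℕ) (D : ℕ → (P (n + 1) →* P n)) (Θ : MulAut (P (n + 1))) : Subgroup (P n) :=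
  Subgroup.map (del (n + 1) D Θ) (Brunnian (n + 1) D)

/-- `w` is the automorphism `w_n` of `P n`: it fixes `A_{i,j}` for `1 ≤ i < j ≤ n-1` and sends
`A_{i,n}` to `A_{i,n} A_{0,i} A_{i,n}⁻¹` for `1 ≤ i ≤ n-1`. -/
def IsW (n : ℕ) (w : MulAut (P n)) : Prop :=
  (∀ i j : ℕ, 1 ≤ i → i < j → j ≤ n - 1 → w (A n i j) = A n i j) ∧
  (∀ i : ℕ, 1 ≤ i → i ≤ n - 1 → w (A n i n) = A n i n * A₀ n i * (A n i n)⁻¹)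



variable {N : ℕ}

lemma rel_eq_one {r : FreeGroup (Fin (N-1))} (hr : r ∈ braidRels N) :
    PresentedGroup.mk (braidRels N) r = 1 := by
  exact (QuotientGroup.eq_one_iff _).mpr (Subgroup.subset_normalClosure hr)

lemma braid_rel1' (i j : Fin (N-1)) (h : (i:ℕ) + 1 = j) :
    σ i * σ j * σ i = σ j * σ i * σ j := by
  have := rel_eq_one (N := N) (r := .of i * .of j * .of i * (.of j * .of i * .of j)⁻¹)
    (Or.inl ⟨i, j, h, rfl⟩)
  have h2 : (σ i * σ j * σ i) * (σ j * σ i * σ j)⁻¹ = 1 := by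
    simpa [σ, PresentedGroup.of, map_mul, map_inv] using this
  rw [mul_inv_eq_one] at h2; exact h2

lemma braid_rel2' (i j : Fin (N-1)) (h : (i:ℕ) + 2 ≤ j) :
    σ i * σ j = σ j * σ i := by
  have := rel_eq_one (N := N) (r := .of i * .of j * (.of j * .of i)⁻¹)
    (Or.inr ⟨i, j, h, rfl⟩)
  have h2 : (σ i * σ j) * (σ j * σ i)⁻¹ = 1 := by
    simpa [σ, PresentedGroup.of, map_mul, map_inv] using this
  rw [mul_inv_eq_one] at h2; exact h2

lemma sig_valid {c : ℕ} (h1 : 1 ≤ c) (h2 : c ≤ N - 1) :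
    sig N c = σ ⟨c - 1, by omega⟩ := by
  rw [sig, dif_pos ⟨h1, h2⟩]

lemma sig_invalid {c : ℕ} (h : ¬ (1 ≤ c ∧ c ≤ N - 1)) : sig N c = 1 := by
  rw [sig, dif_neg h]

lemma braid_rel1 {c : ℕ} (h1 : 1 ≤ c) (h2 : c + 1 ≤ N - 1) :
    sig N c * sig N (c+1) * sig N c = sig N (c+1) * sig N c * sig N (c+1) := by
  rw [sig_valid h1 (by omega), sig_valid (by omega : 1 ≤ c+1) h2]
  exact braid_rel1' _ _ (by simp; omega)

lemma braid_rel2 {c e : ℕ} (h : c + 2 ≤ e) : Commute (sig N c) (sig N e) := by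
  rcases Nat.eq_zero_or_pos c with hc | hc
  · subst hc; rw [sig_invalid (by omega)]; exact Commute.one_left _
  by_cases he : e ≤ N - 1
  · rw [sig_valid hc (by omega), sig_valid (by omega : 1 ≤ e) he]
    exact braid_rel2' _ _ (by simp; omega)
  · rw [sig_invalid (fun hh => he hh.2)]; exact Commute.one_right _

/-- ascending run `σ_a σ_{a+1} ⋯ σ_{a+L-1}` -/
def ascL (N a L : ℕ) : BraidGroup N := ((List.range L).map fun t => sig N (a + t)).prod
/-- descending run `σ_b σ_{b-1} ⋯ σ_{b-L+1}` -/
def descL (N b L : ℕ) : BraidGroup N := ((List.range L).map fun t => sig N (b - t)).prod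

lemma ascL_zero (a : ℕ) : ascL N a 0 = 1 := rfl
lemma descL_zero (b : ℕ) : descL N b 0 = 1 := rfl
lemma ascL_one (a : ℕ) : ascL N a 1 = sig N a := by
  show (List.map (fun t => sig N (a + t)) [0]).prod = sig N a; simp
lemma descL_one (b : ℕ) : descL N b 1 = sig N b := by
  show (List.map (fun t => sig N (b - t)) [0]).prod = sig N b; simp

lemma ascL_add (a L1 L2 : ℕ) : ascL N a (L1 + L2) = ascL N a L1 * ascL N (a + L1) L2 := by
  unfold ascL
  rw [List.range_add, List.map_append, List.prod_append, List.map_map]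
  congr 2
  ext t
  simp [Nat.add_assoc]

lemma descL_add (b L1 L2 : ℕ) : descL N b (L1 + L2) = descL N b L1 * descL N (b - L1) L2 := by
  unfold descL
  rw [List.range_add, List.map_append, List.prod_append, List.map_map]
  congr 2
  ext t
  simp [Nat.sub_sub]

lemma ascL_succ (a L : ℕ) : ascL N a (L + 1) = ascL N a L * sig N (a + L) := by
  rw [ascL_add, ascL_one]

lemma ascL_succ' (a L : ℕ) : ascL N a (L + 1) = sig N a * ascL N (a + 1) L := by
  rw [show L + 1 = 1 + L by omega, ascL_add, ascL_one]

lemma descL_succ (b L : ℕ) : descL N b (L + 1) = descL N b L * sig N (b - L) := by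
  rw [descL_add, descL_one]

lemma descL_succ' (b L : ℕ) : descL N b (L + 1) = sig N b * descL N (b - 1) L := by
  rw [show L + 1 = 1 + L by omega, descL_add, descL_one]

/-- commutation of a single generator with runs whose indices all differ by ≥ 2 -/
lemma commute_sig_ascL {c a L : ℕ} (h : ∀ t, t < L → (a + t) + 2 ≤ c ∨ c + 2 ≤ a + t) :
    Commute (sig N c) (ascL N a L) := by
  apply Commute.list_prod_right
  intro x hx
  simp only [List.mem_map, List.mem_range] at hx
  obtain ⟨t, ht, rfl⟩ := hx
  rcases h t ht with h' | h'
  · exact (braid_rel2 h').symm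
  · exact braid_rel2 h'

lemma commute_sig_descL {c b L : ℕ} (h : ∀ t, t < L → (b - t) + 2 ≤ c ∨ c + 2 ≤ b - t) :
    Commute (sig N c) (descL N b L) := by
  apply Commute.list_prod_right
  intro x hx
  simp only [List.mem_map, List.mem_range] at hx
  obtain ⟨t, ht, rfl⟩ := hx
  rcases h t ht with h' | h'
  · exact (braid_rel2 h').symm
  · exact braid_rel2 h'

lemma asc_shift {a u L : ℕ} (ha : 1 ≤ a) (hL : u + 2 ≤ L) (hN : a + L ≤ N) :
    ascL N a L * sig N (a + u) = sig N (a + u + 1) * ascL N a L := by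
  obtain ⟨r, rfl⟩ : ∃ r, L = u + (2 + r) := ⟨L - u - 2, by omega⟩
  set s1 := sig N (a + u) with hs1
  set s2 := sig N (a + u + 1) with hs2
  have hX : ascL N a (u + (2 + r)) = ascL N a u * s1 * s2 * ascL N (a + u + 2) r := by
    rw [ascL_add, show (2 + r) = 1 + (1 + r) by omega, ascL_add, ascL_one,
      ascL_add, ascL_one]
    rw [hs1, hs2]
    group
  set A := ascL N a u
  set C := ascL N (a + u + 2) r
  have e1 : Commute s1 C := commute_sig_ascL (by intro t ht; omega)
  have e2 : Commute s2 A := commute_sig_ascL (by intro t ht; omega)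
  have hbr : s1 * s2 * s1 = s2 * s1 * s2 := braid_rel1 (by omega) (by omega)
  rw [hX]
  calc A * s1 * s2 * C * s1 = A * (s1 * s2) * (C * s1) := by group
    _ = A * (s1 * s2) * (s1 * C) := by rw [e1.eq.symm]
    _ = A * (s1 * s2 * s1) * C := by group
    _ = A * (s2 * s1 * s2) * C := by rw [hbr]
    _ = A * s2 * (s1 * s2 * C) := by group
    _ = s2 * A * (s1 * s2 * C) := by rw [← e2.eq]
    _ = s2 * (A * s1 * s2 * C) := by group

lemma desc_shift {b u L : ℕ} (hL : u + 2 ≤ L) (hb : L ≤ b) (hN : b ≤ N - 1) :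
    descL N b L * sig N (b - u) = sig N (b - u - 1) * descL N b L := by
  obtain ⟨r, rfl⟩ : ∃ r, L = u + (2 + r) := ⟨L - u - 2, by omega⟩
  set s1 := sig N (b - u) with hs1
  set s2 := sig N (b - u - 1) with hs2
  have hX : descL N b (u + (2 + r)) = descL N b u * s1 * s2 * descL N (b - u - 1 - 1) r := by
    rw [descL_add, show (2 + r) = 1 + (1 + r) by omega, descL_add, descL_one,
      descL_add, descL_one]
    rw [hs1, hs2]
    group
  set A := descL N b u
  set C := descL N (b - u - 1 - 1) r
  have e1 : Commute s1 C := commute_sig_descL (by intro t ht; omega)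
  have e2 : Commute s2 A := commute_sig_descL (by intro t ht; omega)
  have hbr : s1 * s2 * s1 = s2 * s1 * s2 := by
    have := braid_rel1 (N := N) (c := b - u - 1) (by omega) (by omega)
    rw [show b - u - 1 + 1 = b - u by omega] at this
    rw [hs1, hs2]
    exact this.symm
  rw [hX]
  calc A * s1 * s2 * C * s1 = A * (s1 * s2) * (C * s1) := by group
    _ = A * (s1 * s2) * (s1 * C) := by rw [e1.eq.symm]
    _ = A * (s1 * s2 * s1) * C := by group
    _ = A * (s2 * s1 * s2) * C := by rw [hbr]
    _ = A * s2 * (s1 * s2 * C) := by group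
    _ = s2 * A * (s1 * s2 * C) := by rw [← e2.eq]
    _ = s2 * (A * s1 * s2 * C) := by group

lemma desc_pull {b L : ℕ} (hb : L ≤ b) (hN : b ≤ N - 1) :
    ∀ L' b', (∀ t, t < L' → b - L + 2 ≤ b' - t ∧ b' - t ≤ b) →
    descL N b L * descL N b' L' = descL N (b' - 1) L' * descL N b L := by
  intro L'
  induction L' with
  | zero => intro b' _; rw [descL_zero, descL_zero, one_mul, mul_one]
  | succ L' ih =>
    intro b' h
    have h0 := h 0 (by omega)
    have hs : descL N b L * sig N b' = sig N (b' - 1) * descL N b L := by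
      have := desc_shift (N := N) (b := b) (u := b - b') (L := L) (by omega) hb hN
      rw [show b - (b - b') - 1 = b' - 1 by omega, show b - (b - b') = b' by omega] at this
      exact this
    have ih' := ih (b' - 1) (by intro t ht; have := h (t + 1) (by omega); omega)
    rw [descL_succ' b' L', descL_succ' (b' - 1) L']
    calc descL N b L * (sig N b' * descL N (b' - 1) L')
        = (descL N b L * sig N b') * descL N (b' - 1) L' := by group
      _ = (sig N (b' - 1) * descL N b L) * descL N (b' - 1) L' := by rw [hs]
      _ = sig N (b' - 1) * (descL N b L * descL N (b' - 1) L') := by group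
      _ = sig N (b' - 1) * (descL N (b' - 1 - 1) L' * descL N b L) := by rw [ih']
      _ = sig N (b' - 1) * descL N (b' - 1 - 1) L' * descL N b L := by group

lemma chain_eq_descL (i j : ℕ) : chain N i j = descL N (j - 1) (j - i - 1) := rfl

/-- `U_k = A_{1,k} A_{2,k} ⋯ A_{k-1,k}` -/
def UWord (N k : ℕ) : BraidGroup N := ((List.range (k - 1)).map fun t => Agen N (t + 1) k).prod
/-- `V_j = A_{j,j+1} A_{j,j+2} ⋯ A_{j,m}` -/
def VWord (N j m : ℕ) : BraidGroup N :=
  ((List.range (m - j)).map fun t => Agen N j (j + 1 + t)).prod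
def FWord (N j m : ℕ) : BraidGroup N := UWord N j * VWord N j m

lemma UWord_partial (K : ℕ) (hk : K + 1 ≤ N) :
    ∀ r, r ≤ K → ((List.range r).map fun t => Agen N (t + 1) (K + 1)).prod =
      descL N K K * ascL N 1 r * (descL N K (K - r))⁻¹ := by
  intro r
  induction r with
  | zero =>
    intro _
    simp [ascL_zero]
  | succ r ih =>
    intro hr
    rw [List.range_succ, List.map_append, List.prod_append]
    rw [ih (by omega)]
    simp only [List.map_cons, List.map_nil, List.prod_cons, List.prod_nil, mul_one]
    rw [show Agen N (r + 1) (K + 1) = chain N (r + 1) (K + 1) * (sig N (r + 1)) ^ 2 *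
      (chain N (r + 1) (K + 1))⁻¹ from rfl, chain_eq_descL, sq]
    rw [show K + 1 - (r + 1) - 1 = K - (r + 1) by omega, show K + 1 - 1 = K from rfl]
    have hsplit : descL N K (K - r) = descL N K (K - (r + 1)) * sig N (r + 1) := by
      rw [show K - r = (K - (r + 1)) + 1 by omega, descL_succ,
        show K - (K - (r + 1)) = r + 1 by omega]
    rw [hsplit, ascL_succ, show (1 : ℕ) + r = r + 1 by omega]
    group

lemma UWord_eq (k : ℕ) (hk1 : 1 ≤ k) (hk : k ≤ N) :
    UWord N k = descL N (k - 1) (k - 1) * ascL N 1 (k - 1) := by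
  obtain ⟨K, rfl⟩ : ∃ K, k = K + 1 := ⟨k - 1, by omega⟩
  rw [UWord, show K + 1 - 1 = K from rfl, UWord_partial K hk K le_rfl,
    Nat.sub_self, descL_zero]
  group

lemma VWord_eq (j m : ℕ) (hj : 1 ≤ j) (hjm : j ≤ m) (hm : m ≤ N) :
    VWord N j m = ascL N j (m - j) * descL N (m - 1) (m - j) := by
  obtain ⟨q, rfl⟩ : ∃ q, m = j + q := ⟨m - j, by omega⟩
  rw [show j + q - j = q by omega]
  clear hjm
  induction q with
  | zero =>
    simp [VWord, Nat.sub_self, ascL_zero, descL_zero]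
  | succ q ih =>
    have hm' : j + q ≤ N := by omega
    rw [VWord, show j + (q + 1) - j = q + 1 by omega, List.range_succ, List.map_append,
      List.prod_append]
    have ihe : ((List.range q).map fun t => Agen N j (j + 1 + t)).prod =
        ascL N j q * descL N (j + q - 1) q := by
      have := ih hm'
      rw [VWord, show j + q - j = q by omega] at this
      exact this
    rw [ihe]
    simp only [List.map_cons, List.map_nil, List.prod_cons, List.prod_nil, mul_one]
    rw [show Agen N j (j + 1 + q) = chain N j (j + 1 + q) * (sig N j) ^ 2 *
      (chain N j (j + 1 + q))⁻¹ from rfl, chain_eq_descL, sq]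
    rw [show j + 1 + q - 1 = j + q by omega, show j + 1 + q - j - 1 = q by omega]
    rw [show j + (q + 1) - 1 = j + q by omega]
    set B := descL N (j + q - 1) q with hB
    set C := descL N (j + q) q with hC
    set D := descL N (j + q) (q + 1) with hD
    have hi : D = C * sig N j := by
      rw [hD, hC, descL_succ, show j + q - q = j by omega]
    have hii : D = sig N (j + q) * B := by
      rw [hD, hB, descL_succ']
    have hiii : D * C = B * D := by
      have := desc_pull (N := N) (b := j + q) (L := q + 1) (by omega) (by omega) q (j + q)
        (by intro t ht; omega)
      rw [← hC, ← hD] at this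
      rw [this]
    have key : B * (C * (sig N j * sig N j) * C⁻¹) = sig N (j + q) * D := by
      calc B * (C * (sig N j * sig N j) * C⁻¹)
          = (B * (C * sig N j)) * sig N j * C⁻¹ := by group
        _ = B * D * sig N j * C⁻¹ := by rw [← hi]
        _ = D * C * sig N j * C⁻¹ := by rw [← hiii]
        _ = D * (C * sig N j) * C⁻¹ := by group
        _ = D * D * C⁻¹ := by rw [← hi]
        _ = (sig N (j + q) * B) * D * C⁻¹ := by rw [← hii]
        _ = sig N (j + q) * (B * D) * C⁻¹ := by group
        _ = sig N (j + q) * (D * C) * C⁻¹ := by rw [hiii]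
        _ = sig N (j + q) * D := by group
    calc ascL N j q * B * (C * (sig N j * sig N j) * C⁻¹)
        = ascL N j q * (B * (C * (sig N j * sig N j) * C⁻¹)) := by group
      _ = ascL N j q * (sig N (j + q) * D) := by rw [key]
      _ = (ascL N j q * sig N (j + q)) * D := by group
      _ = ascL N j (q + 1) * D := by rw [← ascL_succ]


lemma FWord_comm_sig {j m c : ℕ} (hj : 1 ≤ j) (hjm : j ≤ m) (hm : m ≤ N)
    (hc : c + 2 ≤ j ∨ (j + 1 ≤ c ∧ c + 1 ≤ m)) :
    Commute (FWord N j m) (sig N c) := by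
  rw [FWord, UWord_eq j hj (by omega), VWord_eq j m hj hjm hm]
  rcases hc with hc | ⟨hc1, hc2⟩
  · -- c + 2 ≤ j
    rcases Nat.eq_zero_or_pos c with rfl | hc0
    · rw [sig_invalid (by omega)]; exact Commute.one_right _
    have hV1 : Commute (sig N c) (ascL N j (m - j)) :=
      commute_sig_ascL (by intro t ht; omega)
    have hV2 : Commute (sig N c) (descL N (m - 1) (m - j)) :=
      commute_sig_descL (by intro t ht; omega)
    have hU : Commute (descL N (j - 1) (j - 1) * ascL N 1 (j - 1)) (sig N c) := by
      have h1 : ascL N 1 (j - 1) * sig N c = sig N (c + 1) * ascL N 1 (j - 1) := by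
        have := asc_shift (N := N) (a := 1) (u := c - 1) (L := j - 1)
          le_rfl (by omega) (by omega)
        rw [show 1 + (c - 1) = c by omega, show c + 1 = c + 1 from rfl] at this
        exact this
      have h2 : descL N (j - 1) (j - 1) * sig N (c + 1) = sig N c * descL N (j - 1) (j - 1) := by
        have := desc_shift (N := N) (b := j - 1) (u := j - c - 2) (L := j - 1)
          (by omega) le_rfl (by omega)
        rw [show j - 1 - (j - c - 2) - 1 = c by omega,
          show j - 1 - (j - c - 2) = c + 1 by omega] at this
        exact this
      show _ = _
      calc descL N (j - 1) (j - 1) * ascL N 1 (j - 1) * sig N c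
          = descL N (j - 1) (j - 1) * (ascL N 1 (j - 1) * sig N c) := by group
        _ = descL N (j - 1) (j - 1) * (sig N (c + 1) * ascL N 1 (j - 1)) := by rw [h1]
        _ = (descL N (j - 1) (j - 1) * sig N (c + 1)) * ascL N 1 (j - 1) := by group
        _ = (sig N c * descL N (j - 1) (j - 1)) * ascL N 1 (j - 1) := by rw [h2]
        _ = sig N c * (descL N (j - 1) (j - 1) * ascL N 1 (j - 1)) := by group
    exact Commute.mul_left hU (hV1.symm.mul_left hV2.symm)
  · -- j + 1 ≤ c, c + 1 ≤ m
    have hU1 : Commute (sig N c) (descL N (j - 1) (j - 1)) :=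
      commute_sig_descL (by intro t ht; omega)
    have hU2 : Commute (sig N c) (ascL N 1 (j - 1)) :=
      commute_sig_ascL (by intro t ht; omega)
    have hV : Commute (ascL N j (m - j) * descL N (m - 1) (m - j)) (sig N c) := by
      have h1 : ascL N j (m - j) * sig N (c - 1) = sig N c * ascL N j (m - j) := by
        have := asc_shift (N := N) (a := j) (u := c - 1 - j) (L := m - j)
          hj (by omega) (by omega)
        rw [show j + (c - 1 - j) = c - 1 by omega,
          show c - 1 + 1 = c by omega] at this
        exact this
      have h2 : descL N (m - 1) (m - j) * sig N c = sig N (c - 1) * descL N (m - 1) (m - j) := by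
        have := desc_shift (N := N) (b := m - 1) (u := m - 1 - c) (L := m - j)
          (by omega) (by omega) (by omega)
        rw [show m - 1 - (m - 1 - c) - 1 = c - 1 by omega,
          show m - 1 - (m - 1 - c) = c by omega] at this
        exact this
      show _ = _
      calc ascL N j (m - j) * descL N (m - 1) (m - j) * sig N c
          = ascL N j (m - j) * (descL N (m - 1) (m - j) * sig N c) := by group
        _ = ascL N j (m - j) * (sig N (c - 1) * descL N (m - 1) (m - j)) := by rw [h2]
        _ = (ascL N j (m - j) * sig N (c - 1)) * descL N (m - 1) (m - j) := by group
        _ = (sig N c * ascL N j (m - j)) * descL N (m - 1) (m - j) := by rw [h1]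
        _ = sig N c * (ascL N j (m - j) * descL N (m - 1) (m - j)) := by group
    exact Commute.mul_left (hU1.symm.mul_left hU2.symm) hV

lemma FWord_comm_Agen {i m j k : ℕ} (hi : 1 ≤ i) (him : i ≤ m) (hm : m ≤ N)
    (hij : i + 1 ≤ j) (hjk : j < k) (hkm : k ≤ m) :
    Commute (FWord N i m) (Agen N j k) := by
  have hsig : ∀ c, i + 1 ≤ c → c + 1 ≤ m → Commute (FWord N i m) (sig N c) := by
    intro c h1 h2
    exact FWord_comm_sig hi him hm (Or.inr ⟨h1, h2⟩)
  have hchain : Commute (FWord N i m) (chain N j k) := by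
    apply Commute.list_prod_right
    intro x hx
    simp only [List.mem_map, List.mem_range] at hx
    obtain ⟨t, ht, rfl⟩ := hx
    exact hsig (k - 1 - t) (by omega) (by omega)
  exact (hchain.mul_right ((hsig j hij (by omega)).pow_right 2)).mul_right hchain.inv_right

lemma FWord_self (k : ℕ) : FWord N k k = UWord N k := by
  rw [FWord, VWord, Nat.sub_self]
  simp

lemma UWord_comm_sig {m c : ℕ} (h1 : 1 ≤ m) (hm : m ≤ N) (hc : c + 2 ≤ m) :
    Commute (UWord N m) (sig N c) := by
  rw [← FWord_self]
  exact FWord_comm_sig h1 le_rfl hm (Or.inl hc)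

lemma UWord_comm_UWord {m k : ℕ} (h1 : 1 ≤ m) (hm : m ≤ N) (hk : k + 1 ≤ m) :
    Commute (UWord N m) (UWord N k) := by
  apply Commute.list_prod_right
  intro x hx
  simp only [List.mem_map, List.mem_range] at hx
  obtain ⟨t, ht, rfl⟩ := hx
  have hchain : Commute (UWord N m) (chain N (t + 1) k) := by
    apply Commute.list_prod_right
    intro x hx
    simp only [List.mem_map, List.mem_range] at hx
    obtain ⟨s, hs, rfl⟩ := hx
    exact UWord_comm_sig h1 hm (by omega)
  exact (hchain.mul_right ((UWord_comm_sig h1 hm (by omega)).pow_right 2)).mul_right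
    hchain.inv_right

/-- the product `F_m F_{m-1} ⋯ F_1` -/
def TW (N m : ℕ) : BraidGroup N := ((List.range m).map fun t => FWord N (m - t) m).prod
/-- the full twist word `z_m = U_2 U_3 ⋯ U_m` -/
def zW (N m : ℕ) : BraidGroup N := ((List.range (m - 1)).map fun jt => UWord N (jt + 2)).prod

lemma FWord_split {j m : ℕ} (hjm : j + 1 ≤ m) :
    FWord N j m = FWord N j (m - 1) * Agen N j m := by
  rw [FWord, FWord, VWord, VWord, show m - j = (m - 1 - j) + 1 by omega, List.range_succ,
    List.map_append, List.prod_append]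
  simp only [List.map_cons, List.map_nil, List.prod_cons, List.prod_nil, mul_one]
  rw [show j + 1 + (m - 1 - j) = m by omega]
  group

lemma rearrange {m : ℕ} (hm : m ≤ N) :
    ∀ r, r + 1 ≤ m →
    ((List.range r).map fun t => FWord N (r - t) m).prod =
      ((List.range r).map fun t => FWord N (r - t) (m - 1)).prod *
      ((List.range r).map fun t => Agen N (t + 1) m).prod := by
  intro r
  induction r with
  | zero => simp
  | succ r ih =>
    intro hr
    have e1 : ∀ (f : ℕ → BraidGroup N),
        ((List.range (r + 1)).map fun t => f (r + 1 - t)).prod =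
          f (r + 1) * ((List.range r).map fun t => f (r - t)).prod := by
      intro f
      rw [List.range_succ_eq_map, List.map_cons, List.prod_cons, List.map_map]
      congr 1
      apply congrArg
      apply List.map_congr_left
      intro t _
      simp [Function.comp, Nat.succ_sub_succ]
    rw [e1 (fun x => FWord N x m), e1 (fun x => FWord N x (m - 1))]
    rw [List.range_succ, List.map_append, List.prod_append]
    simp only [List.map_cons, List.map_nil, List.prod_cons, List.prod_nil, mul_one]
    have hcomm : Commute (Agen N (r + 1) m) (((List.range r).map fun t => FWord N (r - t) m).prod) := by
      apply Commute.list_prod_right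
      intro x hx
      simp only [List.mem_map, List.mem_range] at hx
      obtain ⟨t, ht, rfl⟩ := hx
      exact (FWord_comm_Agen (by omega) (by omega) hm (by omega) (by omega) le_rfl).symm
    rw [FWord_split (by omega : r + 1 + 1 ≤ m)]
    calc FWord N (r + 1) (m - 1) * Agen N (r + 1) m *
          (((List.range r).map fun t => FWord N (r - t) m).prod)
        = FWord N (r + 1) (m - 1) *
          (Agen N (r + 1) m * ((List.range r).map fun t => FWord N (r - t) m).prod) := by group
      _ = FWord N (r + 1) (m - 1) *
          (((List.range r).map fun t => FWord N (r - t) m).prod * Agen N (r + 1) m) := by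
            rw [hcomm.eq]
      _ = FWord N (r + 1) (m - 1) *
          ((((List.range r).map fun t => FWord N (r - t) (m - 1)).prod *
            ((List.range r).map fun t => Agen N (t + 1) m).prod) * Agen N (r + 1) m) := by
            rw [ih (by omega)]
      _ = FWord N (r + 1) (m - 1) * (((List.range r).map fun t => FWord N (r - t) (m - 1)).prod) *
          (((List.range r).map fun t => Agen N (t + 1) m).prod * Agen N (r + 1) m) := by group

theorem TW_eq : ∀ m, m ≤ N → TW N m = (zW N m) ^ 2 := by
  intro m
  induction m with
  | zero => intro _; simp [TW, zW]
  | succ q ih =>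
    intro hq
    have e1 : TW N (q + 1) =
        FWord N (q + 1) (q + 1) * ((List.range q).map fun t => FWord N (q - t) (q + 1)).prod := by
      rw [TW, List.range_succ_eq_map, List.map_cons, List.prod_cons, List.map_map]
      congr 1
      apply congrArg
      apply List.map_congr_left
      intro t _
      simp [Function.comp, Nat.succ_sub_succ]
    rcases Nat.eq_zero_or_pos q with rfl | hq1
    · rw [e1]
      simp [zW, FWord_self, UWord]
    rw [e1, rearrange hq q le_rfl, FWord_self, show q + 1 - 1 = q from rfl]
    have hU : ((List.range q).map fun t => Agen N (t + 1) (q + 1)).prod = UWord N (q + 1) := rfl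
    have hT : ((List.range q).map fun t => FWord N (q - t) q).prod = TW N q := rfl
    rw [hU, hT, ih (by omega)]
    have hzsplit : zW N (q + 1) = zW N q * UWord N (q + 1) := by
      rw [zW, zW, show q + 1 - 1 = (q - 1) + 1 by omega, List.range_succ, List.map_append,
        List.prod_append]
      simp only [List.map_cons, List.map_nil, List.prod_cons, List.prod_nil, mul_one]
      rw [show q - 1 + 2 = q + 1 by omega]
    have hcz : Commute (UWord N (q + 1)) (zW N q) := by
      apply Commute.list_prod_right
      intro x hx
      simp only [List.mem_map, List.mem_range] at hx
      obtain ⟨t, ht, rfl⟩ := hx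
      exact UWord_comm_UWord (by omega) hq (by omega)
    rw [hzsplit]
    calc UWord N (q + 1) * ((zW N q) ^ 2 * UWord N (q + 1))
        = UWord N (q + 1) * (zW N q * zW N q) * UWord N (q + 1) := by rw [sq]; group
      _ = UWord N (q + 1) * zW N q * (zW N q * UWord N (q + 1)) := by group
      _ = zW N q * UWord N (q + 1) * (zW N q * UWord N (q + 1)) := by rw [hcz.eq]
      _ = (zW N q * UWord N (q + 1)) ^ 2 := by rw [sq]

-- ===== bookkeeping =====
lemma ASym_self (n i : ℕ) : ASym n i i = 1 := if_pos rfl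
lemma ASym_symm (n i j : ℕ) : ASym n i j = ASym n j i := by
  unfold ASym
  by_cases h : i = j
  · subst h; simp
  · rw [if_neg h, if_neg (Ne.symm h), min_comm, max_comm]
lemma ASym_lt {n i j : ℕ} (h : i < j) : ASym n i j = Agen n i j := by
  unfold ASym
  rw [if_neg (by omega), min_eq_left (by omega), max_eq_right (by omega)]
lemma A_symm (n i j : ℕ) : A n i j = A n j i := Subtype.ext (ASym_symm n i j)
lemma A_self (n i : ℕ) : A n i i = 1 := Subtype.ext (ASym_self n i)

lemma row_prod (m j : ℕ) (hj : 1 ≤ j) (hjm : j ≤ m) :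
    ((List.range m).map fun t => ASym m (t + 1) j).prod = FWord m j m := by
  have hsplit : List.range m = List.range j ++ (List.range (m - j)).map (j + ·) := by
    rw [← List.range_add]
    congr 1
    omega
  rw [hsplit, List.map_append, List.prod_append, List.map_map]
  have h1 : ((List.range j).map fun t => ASym m (t + 1) j).prod = UWord m j := by
    have hs : List.range j = List.range (j - 1) ++ [j - 1] := by
      rw [← List.range_succ]; congr 1; omega
    rw [hs, List.map_append, List.prod_append]
    simp only [List.map_cons, List.map_nil, List.prod_cons, List.prod_nil, mul_one]
    rw [show j - 1 + 1 = j by omega, ASym_self, mul_one, UWord]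
    apply congrArg
    apply List.map_congr_left
    intro t ht
    rw [List.mem_range] at ht
    exact ASym_lt (by omega)
  have h2 : ((List.range (m - j)).map ((fun t => ASym m (t + 1) j) ∘ (j + ·))).prod
      = VWord m j m := by
    rw [VWord]
    apply congrArg
    apply List.map_congr_left
    intro t ht
    rw [List.mem_range] at ht
    show ASym m (j + t + 1) j = Agen m j (j + 1 + t)
    rw [ASym_symm, ASym_lt (by omega), show j + t + 1 = j + 1 + t by omega]
  rw [h1, h2, FWord]

lemma A0gen_eq (m j : ℕ) (hj : 1 ≤ j) (hjm : j ≤ m) : A0gen m j = (FWord m j m)⁻¹ := by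
  rw [A0gen, row_prod m j hj hjm]

lemma fullTwist_coe (m : ℕ) : ((fullTwist m : P m) : BraidGroup m) = zW m m := by
  rw [fullTwist, zW, SubmonoidClass.coe_list_prod, List.map_map]
  apply congrArg
  apply List.map_congr_left
  intro jt hjt
  rw [List.mem_range] at hjt
  show (((List.range (jt + 1)).map fun it => A m (it + 1) (jt + 2)).prod : BraidGroup m)
      = UWord m (jt + 2)
  rw [SubmonoidClass.coe_list_prod, List.map_map, UWord]
  apply congrArg
  apply List.map_congr_left
  intro it hit
  rw [List.mem_range] at hit
  show ASym m (it + 1) (jt + 2) = Agen m (it + 1) (jt + 2)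
  exact ASym_lt (by omega)

lemma A0_eq_list (n j : ℕ) :
    A₀ n j = (((List.range n).map fun t => A n (t + 1) j).prod)⁻¹ := by
  apply Subtype.ext
  rw [A₀]
  show A0gen n j = _
  rw [A0gen]
  push_cast [SubmonoidClass.coe_list_prod, List.map_map]
  rfl

lemma phi_one {x : ℕ} (hx : 1 ≤ x) : phi 1 x = x - 1 := by
  rw [phi, if_neg (by omega)]

section homs
variable {n : ℕ} (d1 : P n →* P (n - 1)) (hd1 : IsStrandRemoval n 1 d1)

include hd1 in
lemma d1_A_one {j : ℕ} (hj1 : 1 ≤ j) (hj : j ≤ n) : d1 (A n 1 j) = 1 := by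
  rcases Nat.lt_or_ge 1 j with hj2 | hj2
  · rw [hd1 1 j le_rfl hj2 hj, if_pos (Or.inl rfl)]
  · have : j = 1 := by omega
    subst this
    rw [A_self, map_one]

include hd1 in
lemma d1_A0 {j : ℕ} (hn : 2 ≤ n) (hj2 : 2 ≤ j) (hjn : j ≤ n) :
    d1 (A₀ n j) = A₀ (n - 1) (j - 1) := by
  rw [A0_eq_list, map_inv, map_list_prod, List.map_map, A0_eq_list]
  apply congrArg
  have hr : List.range n = 0 :: (List.range (n - 1)).map (· + 1) := by
    rw [show n = (n - 1) + 1 by omega, List.range_succ_eq_map]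
    simp [Nat.succ_eq_add_one]
  rw [hr, List.map_cons, List.map_map]
  have h0 : (d1 ∘ fun t => A n (t + 1) j) 0 = 1 := d1_A_one d1 hd1 (by omega) (by omega)
  rw [h0]
  have : ((List.range (n - 1)).map ((d1 ∘ fun t => A n (t + 1) j) ∘ (· + 1)))
      = (List.range (n - 1)).map fun t => A (n - 1) (t + 1) (j - 1) := by
    apply List.map_congr_left
    intro s hs
    rw [List.mem_range] at hs
    show d1 (A n (s + 2) j) = A (n - 1) (s + 1) (j - 1)
    rcases Nat.lt_trichotomy (s + 2) j with h | h | h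
    · rw [hd1 (s + 2) j (by omega) h hjn, if_neg (by omega),
        phi_one (by omega), phi_one (by omega)]
      rfl
    · rw [h, A_self, map_one, show j - 1 = s + 1 by omega, A_self]
    · rw [A_symm, hd1 j (s + 2) (by omega) h (by omega), if_neg (by omega),
        phi_one (by omega), phi_one (by omega),
        show s + 2 - 1 = s + 1 from rfl, A_symm]
  rw [this, List.prod_cons, one_mul]

end homs

lemma prod_inv_rev {G : Type*} [Group G] (F : ℕ → G) :
    ∀ k, ((List.range k).map fun s => (F (s + 1))⁻¹).prod
      = (((List.range k).map fun t => F (k - t)).prod)⁻¹ := by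
  intro k
  induction k with
  | zero => simp
  | succ k ih =>
    have h1 : ((List.range (k + 1)).map fun s => (F (s + 1))⁻¹).prod
        = ((List.range k).map fun s => (F (s + 1))⁻¹).prod * (F (k + 1))⁻¹ := by
      rw [List.range_succ, List.map_append, List.prod_append]
      simp
    have h2 : ((List.range (k + 1)).map fun t => F (k + 1 - t)).prod
        = F (k + 1) * ((List.range k).map fun t => F (k - t)).prod := by
      rw [List.range_succ_eq_map, List.map_cons, List.prod_cons, List.map_map]
      congr 1
      apply congrArg
      apply List.map_congr_left
      intro t _
      simp [Function.comp, Nat.succ_sub_succ]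
    rw [h1, h2, ih, mul_inv_rev]

-- ===== S6 =====
lemma del_A0_list {n : ℕ} (hn : 3 ≤ n) (d : ℕ → (P n →* P (n - 1)))
    (hd : ∀ k, 1 ≤ k → k ≤ n → IsStrandRemoval n k (d k))
    (θ : MulAut (P n)) (hθ : IsTheta n θ) :
    del n d θ (A₀ n 1) = (((List.range (n - 1)).map fun s => A₀ (n - 1) (s + 1)).prod)⁻¹ := by
  have hd1 : IsStrandRemoval n 1 (d 1) := hd 1 le_rfl (by omega)
  rw [A0_eq_list, map_inv, map_list_prod, List.map_map]
  apply congrArg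
  have hr : List.range n = 0 :: (List.range (n - 1)).map (· + 1) := by
    rw [show n = (n - 1) + 1 by omega, List.range_succ_eq_map]
    simp [Nat.succ_eq_add_one]
  rw [hr, List.map_cons, List.map_map]
  have h0 : ((del n d θ) ∘ fun t => A n (t + 1) 1) 0 = 1 := by
    show (del n d θ) (A n 1 1) = 1
    rw [A_self, map_one]
  rw [h0]
  have hmain : ((List.range (n - 1)).map (((del n d θ) ∘ fun t => A n (t + 1) 1) ∘ (· + 1)))
      = (List.range (n - 1)).map fun s => A₀ (n - 1) (s + 1) := by
    apply List.map_congr_left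
    intro s hs
    rw [List.mem_range] at hs
    show (del n d θ) (A n (s + 2) 1) = A₀ (n - 1) (s + 1)
    rw [A_symm]
    show (d 1) (θ (A n 1 (s + 2))) = _
    rw [hθ.2 (s + 2) (by omega) (by omega), map_mul, map_mul, map_inv,
      d1_A_one (d 1) hd1 (by omega) (by omega),
      d1_A0 (d 1) hd1 (by omega) (by omega) (by omega), inv_one, one_mul, mul_one]
    rfl
  rw [hmain, List.prod_cons, one_mul]

-- ===== S7 =====
lemma prod_A0_inv_eq {m : ℕ} (hm : 1 ≤ m) :
    (((List.range m).map fun s => A₀ m (s + 1)).prod)⁻¹ = (fullTwist m) ^ 2 := by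
  apply Subtype.ext
  push_cast [SubmonoidClass.coe_list_prod, List.map_map]
  have h1 : (List.range m).map ((Subtype.val) ∘ fun s => A₀ m (s + 1))
      = (List.range m).map fun s => ((FWord m (s + 1) m)⁻¹ : BraidGroup m) := by
    apply List.map_congr_left
    intro s hs
    rw [List.mem_range] at hs
    show A0gen m (s + 1) = _
    rw [A0gen_eq m (s + 1) (by omega) (by omega)]
  rw [h1, prod_inv_rev (fun x => FWord m x m) m, inv_inv]
  have h2 : ((List.range m).map fun t => FWord m (m - t) m).prod = TW m m := rfl
  rw [h2, TW_eq m le_rfl, ← fullTwist_coe]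

-- ===== exponent-sum homomorphism =====
def epsHom (N : ℕ) : BraidGroup N →* Multiplicative ℤ :=
  PresentedGroup.toGroup (f := fun _ => Multiplicative.ofAdd (1 : ℤ)) (by
    rintro r (⟨i, j, hij, rfl⟩ | ⟨i, j, hij, rfl⟩) <;>
      simp only [map_mul, map_inv, FreeGroup.lift_apply_of] <;> group)

lemma eps_sig {N c : ℕ} (h1 : 1 ≤ c) (h2 : c ≤ N - 1) :
    epsHom N (sig N c) = Multiplicative.ofAdd (1 : ℤ) := by
  rw [sig, dif_pos ⟨h1, h2⟩]
  exact PresentedGroup.toGroup.of _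

lemma eps_Agen {N i j : ℕ} (h1 : 1 ≤ i) (h2 : i ≤ N - 1) :
    epsHom N (Agen N i j) = Multiplicative.ofAdd (2 : ℤ) := by
  rw [Agen, map_mul, map_mul, map_inv, map_pow, eps_sig h1 h2]
  rw [mul_comm (epsHom N (chain N i j)), mul_inv_cancel_right]
  rw [sq, ← ofAdd_add]
  norm_num

lemma prod_pow_sum {G : Type*} [Monoid G] (c : G) :
    ∀ l : List ℕ, (l.map fun e => c ^ e).prod = c ^ l.sum := by
  intro l
  induction l with
  | nil => simp
  | cons a l ih => simp [ih, pow_add]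

lemma eps_UWord {N k : ℕ} (hk : k ≤ N) :
    epsHom N (UWord N k) = Multiplicative.ofAdd (2 : ℤ) ^ (k - 1) := by
  rw [UWord, map_list_prod, List.map_map]
  rw [List.prod_eq_pow_card _ (Multiplicative.ofAdd (2 : ℤ)) ?_]
  · simp
  · intro x hx
    simp only [List.mem_map, List.mem_range] at hx
    obtain ⟨t, ht, rfl⟩ := hx
    exact eps_Agen (by omega) (by omega)

lemma fullTwist_sq_ne_one {m : ℕ} (hm : 2 ≤ m) : (fullTwist m) ^ 2 ≠ 1 := by
  intro h
  have hval : ((fullTwist m : P m) : BraidGroup m) ^ 2 = 1 := by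
    have := congrArg (Subtype.val) h
    push_cast at this
    simpa using this
  rw [fullTwist_coe] at hval
  have he := congrArg (epsHom m) hval
  rw [map_pow, map_one] at he
  set S := ((List.range (m - 1)).map (· + 1)).sum with hSdef
  have hz : epsHom m (zW m m) = Multiplicative.ofAdd (2 : ℤ) ^ S := by
    rw [zW, map_list_prod, List.map_map]
    have h3 : (List.range (m - 1)).map ((epsHom m) ∘ fun jt => UWord m (jt + 2))
        = (List.range (m - 1)).map ((fun e => Multiplicative.ofAdd (2 : ℤ) ^ e) ∘ (· + 1)) := by
      apply List.map_congr_left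
      intro jt hjt
      rw [List.mem_range] at hjt
      show epsHom m (UWord m (jt + 2)) = _
      rw [eps_UWord (by omega)]
      rfl
    rw [h3, ← List.map_map, prod_pow_sum]
  rw [hz, ← pow_mul] at he
  have htoadd := congrArg Multiplicative.toAdd he
  rw [toAdd_pow, toAdd_one, toAdd_ofAdd, nsmul_eq_mul] at htoadd
  have hS : 1 ≤ S := by
    apply List.single_le_sum (by intro x _; omega) 1
    exact List.mem_map.mpr ⟨0, List.mem_range.mpr (by omega), rfl⟩
  have : ((S * 2 : ℕ) : ℤ) * 2 = 0 := htoadd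
  omega
/-- For `n ≥ 3`: `∂_n (A_{0,1}) = z_{n-1}²`; consequently
`(∂_n ∘ ∂_{n+1}) (A_{1,2}) = z_{n-1}² ≠ 1 = (∂_n ∘ d_1) (A_{1,2})`, so
`∂_n ∘ ∂_{n+1} ≠ ∂_n ∘ d_1` (disproving the Delta-group identity on the pure braid groups). -/
theorem del_A0_one_eq_fullTwist_sq (n : ℕ) (hn : 3 ≤ n)
    (d : ℕ → (P n →* P (n - 1)))
    (hd : ∀ k, 1 ≤ k → k ≤ n → IsStrandRemoval n k (d k))
    (θ : MulAut (P n)) (hθ : IsTheta n θ)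
    (D : ℕ → (P (n + 1) →* P n))
    (hD : ∀ k, 1 ≤ k → k ≤ n + 1 → IsStrandRemoval (n + 1) k (D k))
    (Θ : MulAut (P (n + 1))) (hΘ : IsTheta (n + 1) Θ)
 :
    del n d θ (A₀ n 1) = (fullTwist (n - 1)) ^ 2 ∧
      del n d θ (del (n + 1) D Θ (A (n + 1) 1 2)) = (fullTwist (n - 1)) ^ 2 ∧
      (fullTwist (n - 1)) ^ 2 ≠ 1 ∧
      del n d θ (D 1 (A (n + 1) 1 2)) = 1 ∧
      (del n d θ).comp (del (n + 1) D Θ) ≠ (del n d θ).comp (D 1) := by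
  have hd1 : IsStrandRemoval n 1 (d 1) := hd 1 le_rfl (by omega)
  have hD1 : IsStrandRemoval (n + 1) 1 (D 1) := hD 1 le_rfl (by omega)
  have part1 : del n d θ (A₀ n 1) = (fullTwist (n - 1)) ^ 2 := by
    rw [del_A0_list hn d hd θ hθ]
    exact prod_A0_inv_eq (by omega)
  have hA1 : D 1 (A (n + 1) 1 2) = 1 := by
    have h := hD1 1 2 le_rfl (by omega) (by omega)
    rw [if_pos (Or.inl rfl)] at h
    exact h
  have hA0 : D 1 (A₀ (n + 1) 2) = A₀ n 1 := by
    have h := d1_A0 (n := n + 1) (j := 2) (D 1) hD1 (by omega) (by omega) (by omega)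
    exact h
  have hinner : del (n + 1) D Θ (A (n + 1) 1 2) = A₀ n 1 := by
    show D 1 (Θ (A (n + 1) 1 2)) = _
    rw [hΘ.2 2 (by omega) (by omega), map_mul, map_mul, map_inv, hA1, hA0,
      inv_one, one_mul, mul_one]
  have part2 : del n d θ (del (n + 1) D Θ (A (n + 1) 1 2)) = (fullTwist (n - 1)) ^ 2 := by
    rw [hinner]
    exact part1
  have part3 : (fullTwist (n - 1)) ^ 2 ≠ 1 := fullTwist_sq_ne_one (by omega)
  have part4 : del n d θ (D 1 (A (n + 1) 1 2)) = 1 := by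
    rw [hA1, map_one]
  refine ⟨part1, part2, part3, part4, ?_⟩
  intro hcontra
  have happ := DFunLike.congr_fun hcontra (A (n + 1) 1 2)
  rw [MonoidHom.comp_apply, MonoidHom.comp_apply] at happ
  exact part3 ((part2.symm.trans happ).trans part4)

end Braids
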